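/- arXiv:2605.26260 — 3 statements merged into one kernel-verified Lean document; each statement's English description precedes it below -/
import Mathlib

section
/- Under the setup of the one-step inequality applied at u = x* (a minimizer of F), with z_{k+1} = (1−a)v_k + a x_{k+1} and x_{k+1} = (1−a)x_k + a v_k, one has G_{k+1} + (μ̂/(2a)) V_{k+1} ≤ (μ̂(1−a)/(2a)) V_k + ((μ̂−μ_f)/2) X_{k+1} − (μ̂(1−a)³/2) D_k − (μ̂/(2a)) R_{k+1} + (L/2) M_{k+1}, where G_k := F(v_k) − F(x*), V_k := ‖v_k − x*‖², X_k := ‖x_k − x*‖², D_k := ‖x_k − v_k‖², R_{k+1} := ‖v_{k+1} − z_{k+1}‖², M_{k+1} := ‖v_{k+1} − x_{k+1}‖². -/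
open RealInnerProductSpace intervalIntegral

section Helpers
variable {E : Type*} [NormedAddCommGroup E] [InnerProductSpace ℝ E] [CompleteSpace E]

lemma combo_sq (t : ℝ) (p q : E) :
    ‖(1-t)•p + t•q‖^2 = (1-t)*‖p‖^2 + t*‖q‖^2 - t*(1-t)*‖p-q‖^2 := by
  have h : ∀ z : E, ‖z‖^2 = ⟪z,z⟫ := fun z => (real_inner_self_eq_norm_sq z).symm
  simp only [h, inner_add_left, inner_add_right, inner_sub_left, inner_sub_right,
    real_inner_smul_left, real_inner_smul_right, real_inner_comm p q]
  ring

lemma descent (f : E → ℝ) (f' : E → E) (hdiff : ∀ x, HasGradientAt f (f' x) x)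
    (L : ℝ) (hL : 0 ≤ L) (hlip : ∀ x y, ‖f' x - f' y‖ ≤ L * ‖x - y‖) (x y : E) :
    f y ≤ f x + ⟪f' x, y - x⟫ + L/2 * ‖y-x‖^2 := by
  have hcf' : Continuous f' := by
    refine (LipschitzWith.of_dist_le_mul (K := L.toNNReal) (f := f') ?_).continuous
    intro a b
    rw [dist_eq_norm, dist_eq_norm, Real.coe_toNNReal _ hL]
    exact hlip a b
  have hline : ∀ t : ℝ, HasDerivAt (fun s : ℝ => x + s • (y - x)) (y - x) t := by
    intro t
    simpa using ((hasDerivAt_id t).smul_const (y - x)).const_add x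
  have hg : ∀ t : ℝ, HasDerivAt (fun s : ℝ => f (x + s • (y - x)))
      ⟪f' (x + t • (y - x)), y - x⟫ t := by
    intro t
    have h1 := (hdiff (x + t • (y - x))).hasFDerivAt.comp_hasDerivAt t (hline t)
    simp [InnerProductSpace.toDual_apply_apply] at h1; exact h1
  have hcont : Continuous (fun t : ℝ => ⟪f' (x + t • (y - x)), y - x⟫) := by
    exact (hcf'.comp (by continuity)).inner continuous_const
  have hftc : f y - f x = ∫ t in (0:ℝ)..1, ⟪f' (x + t • (y - x)), y - x⟫ := by
    have := intervalIntegral.integral_eq_sub_of_hasDerivAt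
      (f := fun s : ℝ => f (x + s • (y - x))) (a := (0:ℝ)) (b := 1)
      (fun t _ => hg t) (hcont.intervalIntegrable 0 1)
    simpa using this.symm
  have hbound : (∫ t in (0:ℝ)..1, ⟪f' (x + t • (y - x)), y - x⟫) ≤
      ∫ t in (0:ℝ)..1, (⟪f' x, y - x⟫ + L * t * ‖y - x‖^2) := by
    refine integral_mono_on zero_le_one (hcont.intervalIntegrable 0 1)
      ((by continuity : Continuous fun t : ℝ => ⟪f' x, y - x⟫ + L * t * ‖y - x‖^2).intervalIntegrable 0 1) ?_
    intro t ht
    have h1 : ⟪f' (x + t • (y - x)) - f' x, y - x⟫ ≤ L * t * ‖y - x‖^2 := by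
      calc ⟪f' (x + t • (y - x)) - f' x, y - x⟫ ≤ ‖f' (x + t • (y - x)) - f' x‖ * ‖y - x‖ :=
            real_inner_le_norm _ _
        _ ≤ (L * ‖(x + t • (y - x)) - x‖) * ‖y - x‖ := by
            gcongr; exact hlip _ _
        _ = L * (|t| * ‖y - x‖) * ‖y - x‖ := by rw [add_sub_cancel_left, norm_smul]; simp
        _ = L * t * ‖y - x‖^2 := by rw [abs_of_nonneg ht.1]; ring
    have h2 : ⟪f' (x + t • (y - x)) - f' x, y - x⟫ =
        ⟪f' (x + t • (y - x)), y - x⟫ - ⟪f' x, y - x⟫ := inner_sub_left _ _ _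
    linarith [h1, h2.symm.le, h2.le]
  have hval : (∫ t in (0:ℝ)..1, (⟪f' x, y - x⟫ + L * t * ‖y - x‖^2)) =
      ⟪f' x, y - x⟫ + L/2 * ‖y - x‖^2 := by
    have hrw : ∀ t : ℝ, ⟪f' x, y - x⟫ + L * t * ‖y - x‖^2
        = ⟪f' x, y - x⟫ + (L * ‖y - x‖^2) * t := fun t => by ring
    simp_rw [hrw]
    rw [intervalIntegral.integral_add intervalIntegrable_const
      ((by continuity : Continuous fun t : ℝ => L * ‖y - x‖^2 * t).intervalIntegrable 0 1),
      intervalIntegral.integral_const_mul, integral_id]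
    simp; ring
  nlinarith [hftc, hbound, hval]

lemma three_point (r : E → ℝ) (hr : ConvexOn ℝ Set.univ r) (c : ℝ) (hc : 0 < c)
    (w v : E) (hprox : ∀ u, r v + c * ‖v - w‖^2 ≤ r u + c * ‖u - w‖^2) (u : E) :
    r v + c * ‖v - w‖^2 + c * ‖u - v‖^2 ≤ r u + c * ‖u - w‖^2 := by
  refine le_of_forall_pos_le_add fun ε hε => ?_
  set K : ℝ := c * ‖v - u‖^2 with hK
  have hK0 : 0 ≤ K := by positivity
  set t : ℝ := min 1 (ε / (K + 1)) with htdef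
  have ht0 : 0 < t := lt_min one_pos (by positivity)
  have ht1 : t ≤ 1 := min_le_left _ _
  have htK : t * K ≤ ε := by
    have h1 : t ≤ ε / (K + 1) := min_le_right _ _
    have : t * K ≤ (ε / (K + 1)) * K := by gcongr
    have h2 : (ε / (K + 1)) * K ≤ ε := by
      rw [div_mul_eq_mul_div, div_le_iff₀ (by positivity)]
      nlinarith
    linarith
  have hmix := hprox ((1-t) • v + t • u)
  have hconv := hr.2 (Set.mem_univ v) (Set.mem_univ u) (by linarith : (0:ℝ) ≤ 1 - t)
    ht0.le (by ring)
  simp only [smul_eq_mul] at hconv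
  have hvec : (1-t) • (v - w) + t • (u - w) = ((1-t) • v + t • u) - w := by
    simp [smul_sub]; module
  have hq : ‖((1-t) • v + t • u) - w‖^2
      = (1-t)*‖v-w‖^2 + t*‖u-w‖^2 - t*(1-t)*‖v-u‖^2 := by
    rw [← hvec, combo_sq]
    congr 3
    abel
  have h1 : r v + c * ‖v - w‖^2 ≤ (1-t) * r v + t * r u
      + c * ((1-t)*‖v-w‖^2 + t*‖u-w‖^2 - t*(1-t)*‖v-u‖^2) := by
    calc r v + c * ‖v - w‖^2 ≤ r ((1-t) • v + t • u) + c * ‖((1-t) • v + t • u) - w‖^2 := hmix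
      _ ≤ (1-t) * r v + t * r u + c * ((1-t)*‖v-w‖^2 + t*‖u-w‖^2 - t*(1-t)*‖v-u‖^2) := by
          rw [hq]; linarith [hconv]
  have h2 : t * (r v + c * ‖v - w‖^2 + c * (1-t) * ‖v - u‖^2) ≤ t * (r u + c * ‖u - w‖^2) := by
    nlinarith [h1]
  have h3 : r v + c * ‖v - w‖^2 + c * (1-t) * ‖v - u‖^2 ≤ r u + c * ‖u - w‖^2 :=
    le_of_mul_le_mul_left (by linarith) ht0
  have huv : ‖u - v‖ = ‖v - u‖ := norm_sub_rev _ _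
  rw [huv]
  have hexp : c * (1-t) * ‖v - u‖^2 = c * ‖v - u‖^2 - t * K := by rw [hK]; ring
  linarith [h3, htK]


end Helpers

/-- expansion of the one-step inequality at the solution `x*`. -/
theorem stmt_7 {d : ℕ} (f : EuclideanSpace ℝ (Fin d) → ℝ)
    (f' : EuclideanSpace ℝ (Fin d) → EuclideanSpace ℝ (Fin d))
    (hdiff : ∀ x, HasGradientAt f (f' x) x)
    (L μf : ℝ) (hL : 0 ≤ L) (hμf : 0 ≤ μf)
    (hLsmooth : ∀ x y, ‖f' x - f' y‖ ≤ L * ‖x - y‖)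
    (hstrong : ∀ x y, f x + ⟪f' x, y - x⟫ + μf / 2 * ‖y - x‖ ^ 2 ≤ f y)
    (r : EuclideanSpace ℝ (Fin d) → ℝ) (hr : ConvexOn ℝ Set.univ r)
    (F : EuclideanSpace ℝ (Fin d) → ℝ) (hF : ∀ x, F x = f x + r x)
    (xstar : EuclideanSpace ℝ (Fin d)) (hmin : ∀ u, F xstar ≤ F u)
    (a μ : ℝ) (ha : a ∈ Set.Ioo (0:ℝ) 1) (hμ : 0 < μ)
    (xk vk xk1 zk1 vk1 : EuclideanSpace ℝ (Fin d))
    (hx : xk1 = (1 - a) • xk + a • vk)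
    (hz : zk1 = (1 - a) • vk + a • xk1)
    (hprox : ∀ u, r vk1 + μ / (2 * a) * ‖vk1 - (zk1 - (a / μ) • f' xk1)‖ ^ 2 ≤
        r u + μ / (2 * a) * ‖u - (zk1 - (a / μ) • f' xk1)‖ ^ 2) :
    (F vk1 - F xstar) + μ / (2 * a) * ‖vk1 - xstar‖ ^ 2 ≤
      μ * (1 - a) / (2 * a) * ‖vk - xstar‖ ^ 2
      + (μ - μf) / 2 * ‖xk1 - xstar‖ ^ 2
      - μ * (1 - a) ^ 3 / 2 * ‖xk - vk‖ ^ 2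
      - μ / (2 * a) * ‖vk1 - zk1‖ ^ 2
      + L / 2 * ‖vk1 - xk1‖ ^ 2 := by
  obtain ⟨ha0, ha1⟩ := ha
  set g : EuclideanSpace ℝ (Fin d) := f' xk1 with hg
  set c : ℝ := μ / (2 * a) with hc
  have hc0 : 0 < c := by positivity
  set w : EuclideanSpace ℝ (Fin d) := zk1 - (a / μ) • g with hw
  -- three point inequality at xstar
  have h3p := three_point r hr c hc0 w vk1 (fun u => hprox u) xstar
  -- expansion of ‖u - w‖²
  have hexpand : ∀ u : EuclideanSpace ℝ (Fin d), ‖u - w‖^2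
      = ‖u - zk1‖^2 + 2*(a/μ)*⟪u - zk1, g⟫ + (a/μ)^2*‖g‖^2 := by
    intro u
    have h1 : u - w = (u - zk1) + (a/μ) • g := by rw [hw]; abel
    rw [h1, norm_add_sq_real, real_inner_smul_right, norm_smul]
    rw [Real.norm_eq_abs, abs_of_nonneg (by positivity : (0:ℝ) ≤ a/μ)]
    ring
  have hca : c * (2*(a/μ)) = 1 := by
    rw [hc]; field_simp
  -- inequality (I)
  have hI : r vk1 + c*‖vk1 - zk1‖^2 + ⟪vk1 - xstar, g⟫ + c*‖vk1 - xstar‖^2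
      ≤ r xstar + c*‖xstar - zk1‖^2 := by
    have e1 := hexpand vk1
    have e2 := hexpand xstar
    have e3 : ⟪vk1 - zk1, g⟫ - ⟪xstar - zk1, g⟫ = ⟪vk1 - xstar, g⟫ := by
      rw [← inner_sub_left]
      congr 1
      abel
    have e4 : ‖xstar - vk1‖ = ‖vk1 - xstar‖ := norm_sub_rev _ _
    rw [e1, e2, e4] at h3p
    have key : c*(2*(a/μ))*⟪vk1 - zk1, g⟫ - c*(2*(a/μ))*⟪xstar - zk1, g⟫
        = ⟪vk1 - xstar, g⟫ := by
      rw [← mul_sub, hca, one_mul, e3]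
    nlinarith [h3p, key]
  -- descent lemma (II)
  have hII := descent f f' hdiff L hL hLsmooth xk1 vk1
  rw [← hg] at hII
  -- strong convexity (III)
  have hIII := hstrong xk1 xstar
  rw [← hg] at hIII
  have hinner : ⟪g, vk1 - xk1⟫ - ⟪vk1 - xstar, g⟫ = ⟪g, xstar - xk1⟫ := by
    rw [show ⟪vk1 - xstar, g⟫ = ⟪g, vk1 - xstar⟫ from real_inner_comm _ _,
      inner_sub_right, inner_sub_right, inner_sub_right]
    ring
  -- expansion of ‖xstar - zk1‖²
  have hxv : xk1 - vk = (1-a) • (xk - vk) := by rw [hx]; module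
  have hxv2 : ‖xk1 - vk‖^2 = (1-a)^2 * ‖xk - vk‖^2 := by
    rw [hxv, norm_smul, Real.norm_eq_abs, abs_of_nonneg (by linarith : (0:ℝ) ≤ 1-a)]
    ring
  have hzvec : (1-a) • (xstar - vk) + a • (xstar - xk1) = xstar - zk1 := by
    rw [hz]; module
  have hz2 : ‖xstar - zk1‖^2 = (1-a)*‖vk - xstar‖^2 + a*‖xk1 - xstar‖^2
      - a*(1-a)*(1-a)^2*‖xk - vk‖^2 := by
    rw [← hzvec, combo_sq]
    rw [norm_sub_rev xstar vk, norm_sub_rev xstar xk1]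
    have : xstar - vk - (xstar - xk1) = xk1 - vk := by abel
    rw [this, hxv2]
    ring
  have hSZ : c * ‖xstar - zk1‖^2 = μ*(1-a)/(2*a)*‖vk - xstar‖^2 + μ/2*‖xk1 - xstar‖^2
      - μ*(1-a)^3/2*‖xk - vk‖^2 := by
    rw [hz2, hc]
    field_simp
  rw [hF vk1, hF xstar]
  have hII' : f vk1 ≤ f xstar + ⟪vk1 - xstar, g⟫ - μf/2*‖xstar - xk1‖^2 + L/2*‖vk1 - xk1‖^2 := by
    linarith [hII, hIII, hinner]
  rw [norm_sub_rev xstar xk1] at hII'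
  linarith [hI, hII', hSZ]
end

section
/- Assume f is convex, L-smooth and μ_f-strongly convex (μ_f ≥ 0), r is proper closed convex, F = f + r has a minimizer x*, a ∈ (0,1) and μ̂ ≥ L. For one step of constant-parameter Prox-NAG-GS (x_{k+1} = (1−a)x_k + a v_k, z_{k+1} = (1−a)v_k + a x_{k+1}, v_{k+1} = prox_{(a/μ̂) r}(z_{k+1} − (a/μ̂)∇f(x_{k+1}))), one has the reduced inequality: F(v_{k+1}) − F(x*) + (μ̂/(2a))‖v_{k+1} − x*‖² ≤ (μ̂(1−a)/(2a))‖v_k − x*‖² + ((μ̂ − μ_f)/2)‖x_{k+1} − x*‖². -/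
open RealInnerProductSpace

/-- Descent lemma: an `L`-Lipschitz gradient gives a quadratic upper bound. -/
lemma descent_lemma {d : ℕ} (f : EuclideanSpace ℝ (Fin d) → ℝ)
    (f' : EuclideanSpace ℝ (Fin d) → EuclideanSpace ℝ (Fin d))
    (hdiff : ∀ x, HasGradientAt f (f' x) x)
    (L : ℝ) (hL : 0 ≤ L)
    (hLsmooth : ∀ x y, ‖f' x - f' y‖ ≤ L * ‖x - y‖)
    (x y : EuclideanSpace ℝ (Fin d)) :
    f y ≤ f x + ⟪f' x, y - x⟫ + L / 2 * ‖y - x‖ ^ 2 := by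
  set c : EuclideanSpace ℝ (Fin d) := y - x with hc
  set φ : ℝ → ℝ := fun t => f (x + t • c) - t * ⟪f' x, c⟫ - L / 2 * t ^ 2 * ‖c‖ ^ 2 with hφ
  have hγ : ∀ t : ℝ, HasDerivAt (fun s : ℝ => x + s • c) c t := by
    intro t
    simpa using ((hasDerivAt_id t).smul_const c).const_add x
  have hφd : ∀ t : ℝ, HasDerivAt φ
      (⟪f' (x + t • c), c⟫ - ⟪f' x, c⟫ - L * t * ‖c‖ ^ 2) t := by
    intro t
    have h1 : HasDerivAt (fun s : ℝ => f (x + s • c)) (⟪f' (x + t • c), c⟫) t := by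
      have := (hdiff (x + t • c)).hasFDerivAt.comp_hasDerivAt t (hγ t)
      simpa [InnerProductSpace.toDual_apply_apply, Function.comp_def] using this
    have h2 : HasDerivAt (fun s : ℝ => s * ⟪f' x, c⟫) (⟪f' x, c⟫) t := by
      simpa using (hasDerivAt_id t).mul_const (⟪f' x, c⟫)
    have h3 : HasDerivAt (fun s : ℝ => L / 2 * s ^ 2 * ‖c‖ ^ 2)
        (L * t * ‖c‖ ^ 2) t := by
      have := ((hasDerivAt_pow 2 t).const_mul (L / 2)).mul_const (‖c‖ ^ 2)
      exact this.congr_deriv (by rw [show (2:ℕ) - 1 = 1 from rfl, pow_one]; push_cast; ring)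
    exact (h1.sub h2).sub h3
  have hanti : AntitoneOn φ (Set.Icc (0:ℝ) 1) := by
    apply antitoneOn_of_deriv_nonpos (convex_Icc 0 1)
    · exact fun t _ => (hφd t).differentiableAt.continuousAt.continuousWithinAt
    · intro t ht
      exact (hφd t).differentiableAt.differentiableWithinAt
    · intro t ht
      rw [(hφd t).deriv]
      rw [interior_Icc] at ht
      have hti : 0 < t := ht.1
      have key : ⟪f' (x + t • c) - f' x, c⟫ ≤ L * t * ‖c‖ ^ 2 := by
        calc ⟪f' (x + t • c) - f' x, c⟫ ≤ ‖f' (x + t • c) - f' x‖ * ‖c‖ :=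
              real_inner_le_norm _ _
          _ ≤ (L * ‖(x + t • c) - x‖) * ‖c‖ := by
              apply mul_le_mul_of_nonneg_right (hLsmooth _ _) (norm_nonneg _)
          _ = L * t * ‖c‖ ^ 2 := by
              have : (x + t • c) - x = t • c := by abel
              rw [this, norm_smul, Real.norm_eq_abs, abs_of_pos hti]
              ring
      have : ⟪f' (x + t • c), c⟫ - ⟪f' x, c⟫ = ⟪f' (x + t • c) - f' x, c⟫ := by
        rw [inner_sub_left]
      linarith [key, this.ge, this.le]
  have h01 : φ 1 ≤ φ 0 :=
    hanti (by norm_num) (by norm_num) (by norm_num)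
  have h0 : φ 0 = f x := by simp [hφ]
  have h1 : φ 1 = f y - ⟪f' x, c⟫ - L / 2 * ‖c‖ ^ 2 := by
    simp [hφ, hc]
  rw [h0, h1] at h01
  linarith


/-- Strong form of prox optimality: the minimality inequality yields a subgradient
inequality in the limit. -/
lemma prox_subgrad {d : ℕ} (r : EuclideanSpace ℝ (Fin d) → ℝ) (hr : ConvexOn ℝ Set.univ r)
    (c : ℝ) (hc : 0 < c) (w v1 : EuclideanSpace ℝ (Fin d))
    (hmin : ∀ u, r v1 + c * ‖v1 - w‖ ^ 2 ≤ r u + c * ‖u - w‖ ^ 2)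
    (u : EuclideanSpace ℝ (Fin d)) :
    r v1 ≤ r u + 2 * c * ⟪v1 - w, u - v1⟫ := by
  apply le_of_forall_pos_le_add
  intro ε hε
  set D := c * ‖u - v1‖ ^ 2 with hD
  have hD0 : 0 ≤ D := mul_nonneg hc.le (sq_nonneg _)
  set t := min 1 (ε / (D + 1)) with ht
  have ht0 : 0 < t := lt_min one_pos (div_pos hε (by linarith))
  have ht1 : t ≤ 1 := min_le_left _ _
  have hte : t ≤ ε / (D + 1) := min_le_right _ _
  have hcomb : r ((1 - t) • v1 + t • u) ≤ (1 - t) * r v1 + t * r u :=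
    hr.2 (Set.mem_univ _) (Set.mem_univ _) (by linarith) ht0.le (by ring)
  have hvec : (1 - t) • v1 + t • u - w = (v1 - w) + t • (u - v1) := by module
  have hnorm : ‖(1 - t) • v1 + t • u - w‖ ^ 2
      = ‖v1 - w‖ ^ 2 + 2 * t * ⟪v1 - w, u - v1⟫ + t ^ 2 * ‖u - v1‖ ^ 2 := by
    rw [hvec, norm_add_sq_real, real_inner_smul_right, norm_smul, Real.norm_eq_abs,
      abs_of_pos ht0, mul_pow]
    ring
  have h1 := hmin ((1 - t) • v1 + t • u)
  rw [hnorm] at h1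
  have h2 : t * r v1 ≤ t * (r u + 2 * c * ⟪v1 - w, u - v1⟫ + c * t * ‖u - v1‖ ^ 2) := by
    nlinarith [hcomb, h1]
  have h3 : r v1 ≤ r u + 2 * c * ⟪v1 - w, u - v1⟫ + c * t * ‖u - v1‖ ^ 2 :=
    le_of_mul_le_mul_left (by linarith) ht0
  have h5 : t * (D + 1) ≤ ε := by
    rw [← div_mul_cancel₀ ε (show (D:ℝ) + 1 ≠ 0 by linarith)]
    exact mul_le_mul_of_nonneg_right hte (by linarith)
  have h4 : c * t * ‖u - v1‖ ^ 2 ≤ ε := by nlinarith [ht0.le]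
  linarith

set_option maxHeartbeats 1000000 in
/-- the reduced one-step inequality under `μ̂ ≥ L`. -/
theorem stmt_8 {d : ℕ} (f : EuclideanSpace ℝ (Fin d) → ℝ)
    (f' : EuclideanSpace ℝ (Fin d) → EuclideanSpace ℝ (Fin d))
    (hdiff : ∀ x, HasGradientAt f (f' x) x)
    (L μf : ℝ) (hL : 0 ≤ L) (hμf : 0 ≤ μf)
    (hLsmooth : ∀ x y, ‖f' x - f' y‖ ≤ L * ‖x - y‖)
    (hstrong : ∀ x y, f x + ⟪f' x, y - x⟫ + μf / 2 * ‖y - x‖ ^ 2 ≤ f y)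
    (r : EuclideanSpace ℝ (Fin d) → ℝ) (hr : ConvexOn ℝ Set.univ r)
    (F : EuclideanSpace ℝ (Fin d) → ℝ) (hF : ∀ x, F x = f x + r x)
    (xstar : EuclideanSpace ℝ (Fin d)) (hmin : ∀ u, F xstar ≤ F u)
    (a μ : ℝ) (ha : a ∈ Set.Ioo (0:ℝ) 1) (hμL : L ≤ μ) (hμ : 0 < μ)
    (xk vk xk1 zk1 vk1 : EuclideanSpace ℝ (Fin d))
    (hx : xk1 = (1 - a) • xk + a • vk)
    (hz : zk1 = (1 - a) • vk + a • xk1)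
    (hprox : ∀ u, r vk1 + μ / (2 * a) * ‖vk1 - (zk1 - (a / μ) • f' xk1)‖ ^ 2 ≤
        r u + μ / (2 * a) * ‖u - (zk1 - (a / μ) • f' xk1)‖ ^ 2) :
    (F vk1 - F xstar) + μ / (2 * a) * ‖vk1 - xstar‖ ^ 2 ≤
      μ * (1 - a) / (2 * a) * ‖vk - xstar‖ ^ 2
      + (μ - μf) / 2 * ‖xk1 - xstar‖ ^ 2 := by
  obtain ⟨ha0, ha1⟩ := ha
  have haa : a ≠ 0 := ne_of_gt ha0
  have hμ0 : (μ:ℝ) ≠ 0 := ne_of_gt hμ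
  set g := f' xk1 with hg
  -- descent lemma upgraded to μ
  have h_f : f vk1 ≤ f xk1 + ⟪g, vk1 - xk1⟫ + μ / 2 * ‖vk1 - xk1‖ ^ 2 := by
    have := descent_lemma f f' hdiff L hL hLsmooth xk1 vk1
    nlinarith [sq_nonneg ‖vk1 - xk1‖]
  -- prox subgradient inequality at xstar
  have hc : (0:ℝ) < μ / (2 * a) := by positivity
  have h_r0 := prox_subgrad r hr (μ / (2 * a)) hc (zk1 - (a / μ) • g) vk1 hprox xstar
  have hw : vk1 - (zk1 - (a / μ) • g) = (vk1 - zk1) + (a / μ) • g := by module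
  have h_r : r vk1 ≤ r xstar + μ / a * ⟪vk1 - zk1, xstar - vk1⟫ + ⟪g, xstar - vk1⟫ := by
    rw [hw, inner_add_left, real_inner_smul_left] at h_r0
    have : 2 * (μ / (2 * a)) * (⟪vk1 - zk1, xstar - vk1⟫ + a / μ * ⟪g, xstar - vk1⟫)
        = μ / a * ⟪vk1 - zk1, xstar - vk1⟫ + ⟪g, xstar - vk1⟫ := by
      field_simp
    linarith [this.symm.le, this.le, h_r0]
  -- strong convexity at (xk1, xstar)
  have h_s := hstrong xk1 xstar
  rw [← hg] at h_s
  have hinner : ⟪g, vk1 - xk1⟫ + ⟪g, xstar - vk1⟫ = ⟪g, xstar - xk1⟫ := by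
    rw [← inner_add_right]
    congr 1
    abel
  have hnn : ‖xstar - xk1‖ ^ 2 = ‖xk1 - xstar‖ ^ 2 := by rw [norm_sub_rev]
  rw [hnn] at h_s
  -- algebraic expansions
  have e1 : ‖vk1 - xk1‖ ^ 2 = ‖vk1 - xstar‖ ^ 2
      - 2 * ⟪vk1 - xstar, xk1 - xstar⟫ + ‖xk1 - xstar‖ ^ 2 := by
    have h : vk1 - xk1 = (vk1 - xstar) - (xk1 - xstar) := by abel
    rw [h, norm_sub_sq_real]
  have e2 : ‖vk - vk1‖ ^ 2 = ‖vk - xstar‖ ^ 2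
      - 2 * ⟪vk - xstar, vk1 - xstar⟫ + ‖vk1 - xstar‖ ^ 2 := by
    have h : vk - vk1 = (vk - xstar) - (vk1 - xstar) := by abel
    rw [h, norm_sub_sq_real]
  have hv : vk1 - zk1 = (vk1 - xstar) - (1 - a) • (vk - xstar) - a • (xk1 - xstar) := by
    rw [hz]; module
  have hx2 : xstar - vk1 = -(vk1 - xstar) := by abel
  have e3 : ⟪vk1 - zk1, xstar - vk1⟫ = -‖vk1 - xstar‖ ^ 2
      + (1 - a) * ⟪vk - xstar, vk1 - xstar⟫ + a * ⟪vk1 - xstar, xk1 - xstar⟫ := by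
    rw [hv, hx2, inner_neg_right, inner_sub_left, inner_sub_left, real_inner_smul_left,
      real_inner_smul_left, real_inner_self_eq_norm_sq,
      real_inner_comm (xk1 - xstar) (vk1 - xstar)]
    ring
  -- the key identity: the slack is μ(1-a)/(2a)·‖vk - vk1‖²
  have key : μ * (1 - a) / (2 * a) * ‖vk - xstar‖ ^ 2 + μ / 2 * ‖xk1 - xstar‖ ^ 2
      - (μ / 2 * ‖vk1 - xk1‖ ^ 2 + μ / a * ⟪vk1 - zk1, xstar - vk1⟫
        + μ / (2 * a) * ‖vk1 - xstar‖ ^ 2)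
      = μ * (1 - a) / (2 * a) * ‖vk - vk1‖ ^ 2 := by
    rw [e1, e2, e3]
    field_simp
    ring
  have hslack : 0 ≤ μ * (1 - a) / (2 * a) * ‖vk - vk1‖ ^ 2 :=
    mul_nonneg (div_nonneg (by nlinarith) (by linarith)) (sq_nonneg _)
  rw [hF vk1, hF xstar]
  linarith [h_f, h_r, h_s, hinner, key, hslack]
end

section
/- Let f be convex and L-smooth, r proper closed convex, F = f + r with minimizer x*, a ∈ (0,1), μ̂ ≥ L. Define for the constant-parameter Prox-NAG-GS iterates: E_k := (F(v_k) − F(x*)) + (μ̂/(2a))‖v_k − x*‖² + (μ̂(1−a)/(2a))‖x_k − x*‖². Then for every k ≥ 0: E_{k+1} ≤ E_k − (F(v_k) − F(x*)) − (μ̂(1−a)/2)‖x_k − v_k‖². -/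
open RealInnerProductSpace

/-- Descent lemma: an `L`-smooth differentiable function satisfies the quadratic upper bound. -/
private lemma descent_aux {d : ℕ} (f : EuclideanSpace ℝ (Fin d) → ℝ)
    (f' : EuclideanSpace ℝ (Fin d) → EuclideanSpace ℝ (Fin d))
    (hdiff : ∀ x, HasGradientAt f (f' x) x)
    (L : ℝ) (hL : 0 ≤ L)
    (hLsmooth : ∀ x y, ‖f' x - f' y‖ ≤ L * ‖x - y‖)
    (p q : EuclideanSpace ℝ (Fin d)) :
    f q ≤ f p + ⟪f' p, q - p⟫ + L / 2 * ‖q - p‖ ^ 2 := by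
  set w := q - p with hw
  have hline : ∀ t : ℝ, HasDerivAt (fun t : ℝ => p + t • w) w t := by
    intro t
    simpa using ((hasDerivAt_id t).smul_const w).const_add p
  have hphi : ∀ t : ℝ, HasDerivAt (fun t : ℝ => f (p + t • w)) ⟪f' (p + t • w), w⟫ t := by
    intro t
    have h1 := ((hdiff (p + t • w)).hasFDerivAt.comp_hasDerivAt t (hline t))
    simpa [InnerProductSpace.toDual_apply_apply, Function.comp_def] using h1
  set φ : ℝ → ℝ := fun t => f (p + t • w) - t * ⟪f' p, w⟫ - L / 2 * t ^ 2 * ‖w‖ ^ 2 with hφ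
  have hφd : ∀ t : ℝ, HasDerivAt φ
      (⟪f' (p + t • w), w⟫ - ⟪f' p, w⟫ - L * t * ‖w‖ ^ 2) t := by
    intro t
    have h2 : HasDerivAt (fun t : ℝ => t * ⟪f' p, w⟫) ⟪f' p, w⟫ t := by
      simpa using (hasDerivAt_id t).mul_const (⟪f' p, w⟫)
    have h3 : HasDerivAt (fun t : ℝ => L / 2 * t ^ 2 * ‖w‖ ^ 2) (L * t * ‖w‖ ^ 2) t := by
      have h4 := ((hasDerivAt_pow 2 t).const_mul (L / 2)).mul_const (‖w‖ ^ 2)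
      refine h4.congr_deriv ?_
      push_cast
      ring
    exact ((hphi t).sub h2).sub h3
  have hanti : AntitoneOn φ (Set.Icc (0:ℝ) 1) := by
    apply antitoneOn_of_hasDerivWithinAt_nonpos (f' := fun t : ℝ =>
        ⟪f' (p + t • w), w⟫ - ⟪f' p, w⟫ - L * t * ‖w‖ ^ 2) (convex_Icc 0 1)
      (fun t _ => (hφd t).continuousAt.continuousWithinAt)
      (fun t _ => (hφd t).hasDerivWithinAt)
    intro t ht
    rw [interior_Icc] at ht
    have h4 : ⟪f' (p + t • w) - f' p, w⟫ ≤ L * t * ‖w‖ ^ 2 := by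
      calc ⟪f' (p + t • w) - f' p, w⟫ ≤ ‖f' (p + t • w) - f' p‖ * ‖w‖ :=
            real_inner_le_norm _ _
        _ ≤ (L * ‖(p + t • w) - p‖) * ‖w‖ :=
            mul_le_mul_of_nonneg_right (hLsmooth _ _) (norm_nonneg _)
        _ = L * t * ‖w‖ ^ 2 := by
            rw [add_sub_cancel_left, norm_smul, Real.norm_eq_abs, abs_of_pos ht.1]
            ring
    have h5 : ⟪f' (p + t • w) - f' p, w⟫ = ⟪f' (p + t • w), w⟫ - ⟪f' p, w⟫ :=
      inner_sub_left _ _ _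
    linarith [h4, h5.ge]
  have h01 : φ 1 ≤ φ 0 :=
    hanti (Set.left_mem_Icc.2 zero_le_one) (Set.right_mem_Icc.2 zero_le_one) zero_le_one
  have hφ0 : φ 0 = f p := by simp [hφ]
  have hφ1 : φ 1 = f q - ⟪f' p, w⟫ - L / 2 * ‖w‖ ^ 2 := by
    simp [hφ, hw]
  rw [hφ0, hφ1] at h01
  linarith [h01]

/-- Key algebraic inequality for the Lyapunov analysis. -/
private lemma key_ineq {d : ℕ} (a μ L D : ℝ) (ha0 : 0 < a) (ha1 : a < 1)
    (hμ : 0 < μ) (hμL : L ≤ μ)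
    (E1 E2 E3 : EuclideanSpace ℝ (Fin d))
    (hA : D ≤ L / 2 * ‖E3 - ((1 - a) • E1 + a • E2)‖ ^ 2
        + μ / a * ⟪((a * (1 - a)) • E1 + (1 - a + a ^ 2) • E2) - E3, E3⟫) :
    D + μ / (2 * a) * ‖E3‖ ^ 2 + μ * (1 - a) / (2 * a) * ‖(1 - a) • E1 + a • E2‖ ^ 2 ≤
      μ / (2 * a) * ‖E2‖ ^ 2 + μ * (1 - a) / (2 * a) * ‖E1‖ ^ 2
        - μ * (1 - a) / 2 * ‖E1 - E2‖ ^ 2 := by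
  have h2a : (0:ℝ) < 2 * a := by linarith
  have ha' : a ≠ 0 := ne_of_gt ha0
  have hA' : 2 * a * D ≤ a * L * ‖E3 - ((1 - a) • E1 + a • E2)‖ ^ 2
      + 2 * μ * ⟪((a * (1 - a)) • E1 + (1 - a + a ^ 2) • E2) - E3, E3⟫ := by
    have h1 := mul_le_mul_of_nonneg_left hA h2a.le
    have heq : 2 * a * (L / 2 * ‖E3 - ((1 - a) • E1 + a • E2)‖ ^ 2
        + μ / a * ⟪((a * (1 - a)) • E1 + (1 - a + a ^ 2) • E2) - E3, E3⟫)
        = a * L * ‖E3 - ((1 - a) • E1 + a • E2)‖ ^ 2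
        + 2 * μ * ⟪((a * (1 - a)) • E1 + (1 - a + a ^ 2) • E2) - E3, E3⟫ := by
      field_simp
    rw [heq] at h1
    exact h1
  have hm2 : (0:ℝ) ≤ μ * (1 - a) *
      ‖(E3 - ((a * (1 - a)) • E1 + (1 - a + a ^ 2) • E2)) + (a * (1 - a)) • (E1 - E2)‖ ^ 2 :=
    mul_nonneg (mul_nonneg hμ.le (by linarith)) (sq_nonneg _)
  have hq1 : (0:ℝ) ≤ a * ((μ - L) * ‖E3 - ((1 - a) • E1 + a • E2)‖ ^ 2) :=
    mul_nonneg ha0.le (mul_nonneg (by linarith) (sq_nonneg _))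
  have key2 : 2 * a * D + μ * ‖E3‖ ^ 2 + μ * (1 - a) * ‖(1 - a) • E1 + a • E2‖ ^ 2 ≤
      μ * ‖E2‖ ^ 2 + μ * (1 - a) * ‖E1‖ ^ 2 - μ * a * (1 - a) * ‖E1 - E2‖ ^ 2 := by
    simp only [← real_inner_self_eq_norm_sq] at hA' hm2 hq1 ⊢
    simp only [inner_sub_left, inner_sub_right, inner_add_left, inner_add_right,
      real_inner_smul_left, real_inner_smul_right, real_inner_comm E2 E1,
      real_inner_comm E3 E1, real_inner_comm E3 E2] at hA' hm2 hq1 ⊢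
    ring_nf at hA' hm2 hq1 ⊢
    linarith [hA', hm2, hq1]
  have e1 : D + μ / (2 * a) * ‖E3‖ ^ 2 + μ * (1 - a) / (2 * a) * ‖(1 - a) • E1 + a • E2‖ ^ 2
      = (2 * a * D + μ * ‖E3‖ ^ 2 + μ * (1 - a) * ‖(1 - a) • E1 + a • E2‖ ^ 2) / (2 * a) := by
    field_simp
  have e2 : μ / (2 * a) * ‖E2‖ ^ 2 + μ * (1 - a) / (2 * a) * ‖E1‖ ^ 2
        - μ * (1 - a) / 2 * ‖E1 - E2‖ ^ 2
      = (μ * ‖E2‖ ^ 2 + μ * (1 - a) * ‖E1‖ ^ 2 - μ * a * (1 - a) * ‖E1 - E2‖ ^ 2) / (2 * a) := by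
    field_simp
  rw [e1, e2]
  exact div_le_div_of_nonneg_right key2 h2a.le

/-- descent inequality for the augmented energy in the convex case. -/
theorem stmt_13 {d : ℕ} (f : EuclideanSpace ℝ (Fin d) → ℝ)
    (f' : EuclideanSpace ℝ (Fin d) → EuclideanSpace ℝ (Fin d))
    (hdiff : ∀ x, HasGradientAt f (f' x) x)
    (L : ℝ) (hL : 0 < L)
    (hLsmooth : ∀ x y, ‖f' x - f' y‖ ≤ L * ‖x - y‖)
    (hconv : ∀ x y, f x + ⟪f' x, y - x⟫ ≤ f y)
    (r : EuclideanSpace ℝ (Fin d) → ℝ) (hr : ConvexOn ℝ Set.univ r)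
    (F : EuclideanSpace ℝ (Fin d) → ℝ) (hF : ∀ x, F x = f x + r x)
    (xstar : EuclideanSpace ℝ (Fin d)) (hmin : ∀ u, F xstar ≤ F u)
    (a μ : ℝ) (ha : a ∈ Set.Ioo (0:ℝ) 1) (hμL : L ≤ μ)
    (x v z : ℕ → EuclideanSpace ℝ (Fin d))
    (hx : ∀ k, x (k + 1) = (1 - a) • x k + a • v k)
    (hz : ∀ k, z (k + 1) = (1 - a) • v k + a • x (k + 1))
    (hprox : ∀ k, ∀ u,
      r (v (k + 1)) + μ / (2 * a) * ‖v (k + 1) - (z (k + 1) - (a / μ) • f' (x (k + 1)))‖ ^ 2 ≤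
        r u + μ / (2 * a) * ‖u - (z (k + 1) - (a / μ) • f' (x (k + 1)))‖ ^ 2)
    (En : ℕ → ℝ)
    (hEn : ∀ k, En k = (F (v k) - F xstar) + μ / (2 * a) * ‖v k - xstar‖ ^ 2
        + μ * (1 - a) / (2 * a) * ‖x k - xstar‖ ^ 2) :
    ∀ k, En (k + 1) ≤ En k - (F (v k) - F xstar) - μ * (1 - a) / 2 * ‖x k - v k‖ ^ 2 := by
  obtain ⟨ha0, ha1⟩ := ha
  have hμ : 0 < μ := lt_of_lt_of_le hL hμL
  have ha' : a ≠ 0 := ne_of_gt ha0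
  have hμ' : μ ≠ 0 := ne_of_gt hμ
  intro k
  -- Step 1: subgradient inequality from the prox characterization
  have hsub : 0 ≤ (r xstar - r (v (k+1)))
      + μ / a * ⟪v (k+1) - (z (k+1) - (a / μ) • f' (x (k+1))), xstar - v (k+1)⟫ := by
    set w := z (k+1) - (a / μ) • f' (x (k+1)) with hwdef
    set B := μ / (2*a) * ‖xstar - v (k+1)‖ ^ 2 with hB
    have hBnn : 0 ≤ B := mul_nonneg (by positivity) (sq_nonneg _)
    apply le_of_forall_sub_le
    intro ε hε
    set t := min 1 (ε / (B + 1)) with ht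
    have ht0 : 0 < t := lt_min one_pos (div_pos hε (by linarith))
    have ht1 : t ≤ 1 := min_le_left _ _
    have htB : t * B ≤ ε := by
      have h1 : t ≤ ε / (B + 1) := min_le_right _ _
      calc t * B ≤ (ε / (B+1)) * B := mul_le_mul_of_nonneg_right h1 hBnn
        _ ≤ ε := by
            rw [div_mul_eq_mul_div, div_le_iff₀ (by linarith : (0:ℝ) < B + 1)]
            nlinarith [hε.le, hBnn]
    have hpx := hprox k (v (k+1) + t • (xstar - v (k+1)))
    have hcvx : r (v (k+1) + t • (xstar - v (k+1))) ≤ (1 - t) * r (v (k+1)) + t * r xstar := by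
      have hc := hr.2 (Set.mem_univ (v (k+1))) (Set.mem_univ xstar)
        (by linarith : (0:ℝ) ≤ 1 - t) ht0.le (by ring)
      have hv : (1 - t) • v (k+1) + t • xstar = v (k+1) + t • (xstar - v (k+1)) := by module
      rw [hv] at hc
      simpa [smul_eq_mul] using hc
    have hnorm : ‖v (k+1) + t • (xstar - v (k+1)) - w‖ ^ 2
        = ‖v (k+1) - w‖ ^ 2 + 2 * t * ⟪v (k+1) - w, xstar - v (k+1)⟫
          + t^2 * ‖xstar - v (k+1)‖ ^ 2 := by
      have hv2 : v (k+1) + t • (xstar - v (k+1)) - w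
          = (v (k+1) - w) + t • (xstar - v (k+1)) := by module
      rw [hv2, norm_add_sq_real, real_inner_smul_right, norm_smul, Real.norm_eq_abs,
        abs_of_pos ht0, mul_pow]
      ring
    rw [hnorm] at hpx
    have h6 : μ / (2*a) * (2 * t * ⟪v (k+1) - w, xstar - v (k+1)⟫)
        = t * (μ / a * ⟪v (k+1) - w, xstar - v (k+1)⟫) := by
      field_simp
    have h7 : μ / (2*a) * (t^2 * ‖xstar - v (k+1)‖ ^ 2) = t * (t * B) := by
      rw [hB]; ring
    have hstep : 0 ≤ t * ((r xstar - r (v (k+1)))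
        + μ / a * ⟪v (k+1) - w, xstar - v (k+1)⟫ + t * B) := by
      nlinarith [hpx, hcvx, h6, h7]
    have hdiv : 0 ≤ (r xstar - r (v (k+1)))
        + μ / a * ⟪v (k+1) - w, xstar - v (k+1)⟫ + t * B := by
      have h8 := div_nonneg hstep ht0.le
      rwa [mul_div_cancel_left₀ _ (ne_of_gt ht0)] at h8
    linarith [htB, hdiv]
  -- Step 2: rewrite the subgradient inner product
  have hsubI : ⟪v (k+1) - (z (k+1) - (a / μ) • f' (x (k+1))), xstar - v (k+1)⟫
      = ⟪z (k+1) - v (k+1), v (k+1) - xstar⟫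
        + a / μ * ⟪f' (x (k+1)), xstar - v (k+1)⟫ := by
    rw [show v (k+1) - (z (k+1) - (a / μ) • f' (x (k+1)))
        = (v (k+1) - z (k+1)) + (a / μ) • f' (x (k+1)) by module,
      inner_add_left, real_inner_smul_left]
    congr 1
    rw [show v (k+1) - z (k+1) = -(z (k+1) - v (k+1)) by module,
      show xstar - v (k+1) = -(v (k+1) - xstar) by module, inner_neg_neg]
  have h10 : ⟪f' (x (k+1)), xstar - v (k+1)⟫ = -⟪f' (x (k+1)), v (k+1) - xstar⟫ := by
    rw [← inner_neg_right]
    congr 1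
    module
  have hsub2 : 0 ≤ (r xstar - r (v (k+1)))
      + μ / a * ⟪z (k+1) - v (k+1), v (k+1) - xstar⟫
      - ⟪f' (x (k+1)), v (k+1) - xstar⟫ := by
    rw [hsubI, h10] at hsub
    have h11 : μ / a * (⟪z (k+1) - v (k+1), v (k+1) - xstar⟫
        + a / μ * -⟪f' (x (k+1)), v (k+1) - xstar⟫)
        = μ / a * ⟪z (k+1) - v (k+1), v (k+1) - xstar⟫
          - ⟪f' (x (k+1)), v (k+1) - xstar⟫ := by
      field_simp
      ring
    rw [h11] at hsub
    linarith [hsub]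
  -- Step 3: descent lemma + convexity of f
  have hdesc := descent_aux f f' hdiff L hL.le hLsmooth (x (k+1)) (v (k+1))
  have hcv := hconv (x (k+1)) xstar
  have hident : ⟪f' (x (k+1)), v (k+1) - x (k+1)⟫
      = ⟪f' (x (k+1)), xstar - x (k+1)⟫ + ⟪f' (x (k+1)), v (k+1) - xstar⟫ := by
    rw [← inner_add_right]
    congr 1
    module
  have hA0 : F (v (k+1)) - F xstar ≤ L / 2 * ‖v (k+1) - x (k+1)‖ ^ 2
      + μ / a * ⟪z (k+1) - v (k+1), v (k+1) - xstar⟫ := by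
    rw [hF (v (k+1)), hF xstar]
    linarith [hdesc, hcv, hsub2, hident.le, hident.ge]
  -- Step 4: express the vectors relative to xstar and apply the key inequality
  have hv1 : v (k+1) - x (k+1)
      = (v (k+1) - xstar) - ((1-a) • (x k - xstar) + a • (v k - xstar)) := by
    rw [hx k]; module
  have hz1 : z (k+1) - v (k+1)
      = ((a*(1-a)) • (x k - xstar) + (1 - a + a^2) • (v k - xstar)) - (v (k+1) - xstar) := by
    rw [hz k, hx k]; module
  have hx1 : x (k+1) - xstar = (1-a) • (x k - xstar) + a • (v k - xstar) := by
    rw [hx k]; module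
  have hxv : x k - v k = (x k - xstar) - (v k - xstar) := by module
  rw [hv1, hz1] at hA0
  have hkey := key_ineq a μ L (F (v (k+1)) - F xstar) ha0 ha1 hμ hμL
    (x k - xstar) (v k - xstar) (v (k+1) - xstar) hA0
  rw [hEn (k+1), hEn k, hx1, hxv]
  linarith [hkey]
end
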